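/- Let X be a locally finite metric space, (X_n) a sparse sequence, and f : ℕ → ℕ a function with f(n) → ∞. If g : X → 𝔻 is supported on ⋃_n X_n and g restricted to X_n lies in M_{n,f(n)} for every n, then g is slowly oscillating. -/

import Mathlib

def SlowlyOscillating {X : Type*} [MetricSpace X] (f : X → ℂ) : Prop :=
  (∃ C : ℝ, ∀ x, ‖f x‖ ≤ C) ∧
  ∀ ε : ℝ, 0 < ε → ∀ R : ℝ, 0 < R → ∃ F : Set X, F.Finite ∧
    ∀ x x', x ∉ F → x' ∉ F → dist x x' ≤ R → ‖f x - f x'‖ < ε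

def Mset {X : Type*} [MetricSpace X] (Xn : Set X) (n m : ℕ) : Set (X → ℂ) :=
  {g | (∀ x, ‖g x‖ ≤ 1) ∧ (∀ x, x ∉ Xn → g x = 0) ∧
    ∀ x x', (∃ z ∈ Xn, dist x z ≤ (n : ℝ)) → (∃ z ∈ Xn, dist x' z ≤ (n : ℝ)) →
      dist x x' ≤ (m : ℝ) → ‖g x - g x'‖ ≤ 1 / (m + 1)}

/-- If `f(n) → ∞` and `g` restricted to `X_n` lies in `M_{n,f(n)}` for every `n`,
then `g` is slowly oscillating. -/
theorem slowlyOscillating_of_mem_Mset {X : Type*} [MetricSpace X]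
    (hX : ∀ (x : X) (r : ℝ), (Metric.closedBall x r).Finite)
    (Xs : ℕ → Set X) (hfin : ∀ n, (Xs n).Finite)
    (hdisj : Pairwise (Function.onFun Disjoint Xs))
    (hsparse : ∀ n m : ℕ, n ≠ m → ∀ x ∈ Xs n, ∀ y ∈ Xs m, (2 * max n m : ℝ) < dist x y)
    (f : ℕ → ℕ) (hf : Filter.Tendsto f Filter.atTop Filter.atTop)
    (g : X → ℂ) (hsupp : ∀ x, g x ≠ 0 → x ∈ ⋃ n, Xs n)
    (hmem : ∀ n, (Xs n).indicator g ∈ Mset (Xs n) n (f n)) :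
    SlowlyOscillating g := by
  constructor
  · refine ⟨1, fun x => ?_⟩
    by_cases hx : g x = 0
    · simp [hx]
    · obtain ⟨s, ⟨n, rfl⟩, hxn⟩ := hsupp x hx
      have h1 := (hmem n).1 x
      rwa [Set.indicator_of_mem hxn] at h1
  · intro ε hε R hR
    obtain ⟨N₁, hN₁⟩ := Filter.eventually_atTop.mp (hf.eventually_ge_atTop (max ⌈R⌉₊ ⌈1/ε⌉₊))
    set N : ℕ := max N₁ ⌈R⌉₊ with hNdef
    have hRN : R ≤ (N : ℝ) := le_trans (Nat.le_ceil R) (by exact_mod_cast le_max_right N₁ ⌈R⌉₊)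
    refine ⟨⋃ n < N, Xs n, Set.Finite.biUnion (Set.finite_Iio N) (fun n _ => hfin n), ?_⟩
    have hmemF : ∀ x n, x ∉ (⋃ n < N, Xs n) → x ∈ Xs n → N ≤ n := by
      intro x n hxF hxn
      by_contra h
      exact hxF (Set.mem_biUnion (lt_of_not_ge h) hxn)
    have hfn : ∀ n, N ≤ n → R ≤ (f n : ℝ) ∧ 1 / ((f n : ℝ) + 1) < ε := by
      intro n hn
      have hfn' := hN₁ n (le_trans (le_max_left _ _) hn)
      constructor
      · exact le_trans (Nat.le_ceil R) (by exact_mod_cast le_trans (le_max_left _ _) hfn')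
      · have h1 : (1:ℝ)/ε ≤ f n :=
          le_trans (Nat.le_ceil _) (by exact_mod_cast le_trans (le_max_right _ _) hfn')
        have hpos : (0:ℝ) < (f n : ℝ) + 1 := by positivity
        rw [div_lt_iff₀ hpos, ← div_lt_iff₀' hε]
        linarith
    have key : ∀ x x', x ∉ (⋃ n < N, Xs n) → x' ∉ (⋃ n < N, Xs n) → dist x x' ≤ R →
        g x ≠ 0 → ‖g x - g x'‖ < ε := by
      intro x x' hxF hx'F hd hgx
      obtain ⟨s, ⟨n, rfl⟩, hxn⟩ := hsupp x hgx
      have hNn : N ≤ n := hmemF x n hxF hxn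
      obtain ⟨hRf, hεf⟩ := hfn n hNn
      have hcond := (hmem n).2.2 x x' ⟨x, hxn, by simp⟩
        ⟨x, hxn, by rw [dist_comm]; exact le_trans hd (le_trans hRN (by exact_mod_cast hNn))⟩
        (le_trans hd hRf)
      rw [Set.indicator_of_mem hxn] at hcond
      have hx' : (Xs n).indicator g x' = g x' := by
        by_cases hgx' : g x' = 0
        · by_cases hmem' : x' ∈ Xs n
          · rw [Set.indicator_of_mem hmem']
          · rw [Set.indicator_of_notMem hmem', hgx']
        · obtain ⟨s, ⟨m, rfl⟩, hx'm⟩ := hsupp x' hgx'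
          have hNm : N ≤ m := hmemF x' m hx'F hx'm
          have hnm : n = m := by
            by_contra hne
            have := hsparse n m hne x hxn x' hx'm
            have h2 : (N : ℝ) ≤ max (n:ℝ) (m:ℝ) := by push_cast; exact_mod_cast le_trans hNn (le_max_left n m)
            have hN1 : (1:ℝ) ≤ N := by
              have : 0 < N := by
                by_contra h0
                push_neg at h0
                interval_cases N
                simp at hRN
                linarith
              exact_mod_cast this
            push_cast at this
            linarith
          subst hnm
          rw [Set.indicator_of_mem hx'm]
      rw [hx'] at hcond
      exact lt_of_le_of_lt hcond hεf
    intro x x' hxF hx'F hd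
    by_cases hgx : g x = 0
    · by_cases hgx' : g x' = 0
      · simp [hgx, hgx', hε]
      · rw [← norm_neg, neg_sub]
        exact key x' x hx'F hxF (by rwa [dist_comm]) hgx'
    · exact key x x' hxF hx'F hd hgx
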